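/- Let ρ̄ ∈ C¹ be a density profile and ψ ∈ H¹₀(h₋,h₊) a function with g∫_{h₋}^{h₊} ρ̄ ψ ψ' dx₃ < 0. Define w = (w₁, w₂, w₃) on Ω = 𝕋² × (h₋,h₊) by w₁ = -L₁ψ'(x₃) sin(x₁/L₁), w₂ = 0, w₃ = ψ(x₃) cos(x₁/L₁). Then ∫_Ω (2gρ̄ ∂₁w₁ w₃ - P'(ρ̄)ρ̄|∂₁w₁ + ∂₃w₃|²) dy = -2g(∫_{h₋}^{h₊} ρ̄ψψ' dx₃)(∫_{𝕋²} cos²(x₁/L₁) dx_h) > 0; in particular ∂₁w₁ + ∂₃w₃ = 0 pointwise, so the pressure stabilizing term vanishes and E₁(w) + E₂(w) > 0. -/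

import Mathlib

set_option maxHeartbeats 1000000


open MeasureTheory Real Set

/-- The partial derivative `∂ᵢ f` along the `i`-th coordinate line. -/
noncomputable def pdl (i : Fin 3) (f : (Fin 3 → ℝ) → ℝ) (x : Fin 3 → ℝ) : ℝ :=
  deriv (fun s : ℝ => f (x + s • (Pi.single i 1 : Fin 3 → ℝ))) 0

/-- The horizontally periodic slab `Ω = 𝕋² × (h₋, h₊)`, realized as one periodicity cell. -/
def slab (hm hp L₁ L₂ : ℝ) : Set (Fin 3 → ℝ) :=
  {x | x 0 ∈ Ioo 0 (2 * π * L₁) ∧ x 1 ∈ Ioo 0 (2 * π * L₂) ∧ x 2 ∈ Ioo hm hp}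

/-- Instability test function for small magnetic fields: with
`w₁ = -L₁ψ'(x₃)sin(x₁/L₁)`, `w₂ = 0`, `w₃ = ψ(x₃)cos(x₁/L₁)` and
`g∫ρ̄ψψ' < 0`, one has `∂₁w₁ + ∂₃w₃ = 0` pointwise and
`∫_Ω (2gρ̄ ∂₁w₁ w₃ - P'(ρ̄)ρ̄|∂₁w₁+∂₃w₃|²) = -2g(∫ρ̄ψψ')(∫cos²(x₁/L₁)) > 0`. -/
theorem instability_test_function
    (hm hp L₁ L₂ g : ℝ) (hh : hm < hp) (hL₁ : 0 < L₁) (hL₂ : 0 < L₂) (hg : 0 < g)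
    (ρ : ℝ → ℝ) (hρ : ContDiff ℝ 1 ρ)
    (a : ℝ → ℝ) (ha : ∀ t, 0 ≤ a t)
    (ψ : ℝ → ℝ) (hψ : ContDiff ℝ 1 ψ) (hbm : ψ hm = 0) (hbp : ψ hp = 0)
    (hneg : g * (∫ t in Ioo hm hp, ρ t * ψ t * deriv ψ t) < 0)
    (w₁ w₃ : (Fin 3 → ℝ) → ℝ)
    (hw₁ : ∀ x, w₁ x = -L₁ * deriv ψ (x 2) * Real.sin (x 0 / L₁))
    (hw₃ : ∀ x, w₃ x = ψ (x 2) * Real.cos (x 0 / L₁)) :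
    (∀ x, pdl 0 w₁ x + pdl 2 w₃ x = 0) ∧
    (∫ x in slab hm hp L₁ L₂,
        (2 * g * ρ (x 2) * pdl 0 w₁ x * w₃ x
          - a (x 2) * (pdl 0 w₁ x + pdl 2 w₃ x) ^ 2))
      = -(2 * g) * (∫ t in Ioo hm hp, ρ t * ψ t * deriv ψ t) *
          (∫ p in (Ioo 0 (2 * π * L₁)) ×ˢ (Ioo 0 (2 * π * L₂)),
            Real.cos (p.1 / L₁) ^ 2) ∧
    0 < ∫ x in slab hm hp L₁ L₂,
        (2 * g * ρ (x 2) * pdl 0 w₁ x * w₃ x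
          - a (x 2) * (pdl 0 w₁ x + pdl 2 w₃ x) ^ 2) := by

  have hL₁0 : L₁ ≠ 0 := ne_of_gt hL₁
  have hψd : Differentiable ℝ ψ := hψ.differentiable one_ne_zero
  -- the two partial derivatives
  have hp0 : ∀ x, pdl 0 w₁ x = -(deriv ψ (x 2)) * Real.cos (x 0 / L₁) := by
    intro x
    have hfun : (fun s : ℝ => w₁ (x + s • (Pi.single 0 1 : Fin 3 → ℝ)))
        = fun s => -L₁ * deriv ψ (x 2) * Real.sin ((x 0 + s) / L₁) := by
      funext s
      rw [hw₁]
      simp [Pi.single_apply]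
    rw [pdl, hfun]
    have h1 : HasDerivAt (fun s : ℝ => (x 0 + s) / L₁) (1 / L₁) 0 := by
      simpa using ((hasDerivAt_id (0:ℝ)).const_add (x 0)).div_const L₁
    have h2 : HasDerivAt (fun s : ℝ => Real.sin ((x 0 + s) / L₁))
        (Real.cos ((x 0 + 0) / L₁) * (1 / L₁)) 0 :=
      (Real.hasDerivAt_sin _).comp 0 h1
    have h3 := (h2.const_mul (-L₁ * deriv ψ (x 2))).deriv
    rw [h3]
    field_simp
    ring
  have hp2 : ∀ x, pdl 2 w₃ x = deriv ψ (x 2) * Real.cos (x 0 / L₁) := by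
    intro x
    have hfun : (fun s : ℝ => w₃ (x + s • (Pi.single 2 1 : Fin 3 → ℝ)))
        = fun s => ψ (x 2 + s) * Real.cos (x 0 / L₁) := by
      funext s
      rw [hw₃]
      simp [Pi.single_apply]
    rw [pdl, hfun]
    have h1 : HasDerivAt (fun s : ℝ => x 2 + s) 1 0 := by
      simpa using (hasDerivAt_id (0:ℝ)).const_add (x 2)
    have h2 : HasDerivAt (fun s : ℝ => ψ (x 2 + s)) (deriv ψ (x 2 + 0) * 1) 0 :=
      (hψd (x 2 + 0)).hasDerivAt.comp 0 h1
    have h3 := (h2.mul_const (Real.cos (x 0 / L₁))).deriv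
    rw [h3]
    ring_nf
  have hdiv : ∀ x, pdl 0 w₁ x + pdl 2 w₃ x = 0 := by
    intro x; rw [hp0, hp2]; ring
  refine ⟨hdiv, ?_⟩
  -- rewrite the integrand
  set I : ℝ := ∫ t in Ioo hm hp, ρ t * ψ t * deriv ψ t with hI
  have hIneg : I < 0 := by nlinarith
  have hinteg : ∀ x : Fin 3 → ℝ,
      2 * g * ρ (x 2) * pdl 0 w₁ x * w₃ x
          - a (x 2) * (pdl 0 w₁ x + pdl 2 w₃ x) ^ 2
      = Real.cos (x 0 / L₁) ^ 2 * (-(2 * g) * (ρ (x 2) * ψ (x 2) * deriv ψ (x 2))) := by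
    intro x
    rw [hp0, hp2, hw₃]
    ring
  -- transport the slab integral to ℝ × ℝ × ℝ
  let e : (Fin 3 → ℝ) ≃ᵐ ℝ × (ℝ × ℝ) :=
    (MeasurableEquiv.piFinSuccAbove (fun _ => ℝ) 0).trans
      ((MeasurableEquiv.refl ℝ).prodCongr (MeasurableEquiv.finTwoArrow))
  have hmp : MeasurePreserving e volume volume :=
    (volume_preserving_piFinSuccAbove (fun _ => ℝ) 0).trans
      ((MeasurePreserving.id _).prod (volume_preserving_finTwoArrow ℝ))
  have he : ∀ x : Fin 3 → ℝ, e x = (x 0, x 1, x 2) := by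
    intro x
    simp [e, MeasurableEquiv.piFinSuccAbove, MeasurableEquiv.finTwoArrow, Fin.removeNth]
    rfl
  set T : Set (ℝ × ℝ × ℝ) :=
    (Ioo 0 (2 * π * L₁)) ×ˢ ((Ioo 0 (2 * π * L₂)) ×ˢ (Ioo hm hp)) with hT
  have hpre : slab hm hp L₁ L₂ = e ⁻¹' T := by
    ext x
    simp [slab, hT, he x]
  have key : (∫ x in slab hm hp L₁ L₂,
        (2 * g * ρ (x 2) * pdl 0 w₁ x * w₃ x
          - a (x 2) * (pdl 0 w₁ x + pdl 2 w₃ x) ^ 2))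
      = ∫ z in T, Real.cos (z.1 / L₁) ^ 2
          * (-(2 * g) * (ρ z.2.2 * ψ z.2.2 * deriv ψ z.2.2)) := by
    rw [hpre, ← hmp.setIntegral_preimage_emb e.measurableEmbedding]
    refine setIntegral_congr_fun (e.measurable (measurableSet_Ioo.prod (measurableSet_Ioo.prod measurableSet_Ioo))) fun x _ => ?_
    rw [hinteg x, he x]
  -- split the product integrals
  have hsplit : (∫ z in T, Real.cos (z.1 / L₁) ^ 2
          * (-(2 * g) * (ρ z.2.2 * ψ z.2.2 * deriv ψ z.2.2)))
      = (∫ u in Ioo 0 (2 * π * L₁), Real.cos (u / L₁) ^ 2)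
        * ∫ y in (Ioo 0 (2 * π * L₂)) ×ˢ (Ioo hm hp),
            -(2 * g) * (ρ y.2 * ψ y.2 * deriv ψ y.2) := by
    rw [hT, Measure.volume_eq_prod]
    exact setIntegral_prod_mul (fun u : ℝ => Real.cos (u / L₁) ^ 2)
      (fun y : ℝ × ℝ => -(2 * g) * (ρ y.2 * ψ y.2 * deriv ψ y.2)) _ _
  have hsplit2 : (∫ y in (Ioo 0 (2 * π * L₂)) ×ˢ (Ioo hm hp),
            -(2 * g) * (ρ y.2 * ψ y.2 * deriv ψ y.2))
      = (∫ _u in Ioo 0 (2 * π * L₂), (1:ℝ))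
        * ∫ t in Ioo hm hp, -(2 * g) * (ρ t * ψ t * deriv ψ t) := by
    rw [Measure.volume_eq_prod,
      ← setIntegral_prod_mul (fun _ : ℝ => (1:ℝ))
        (fun t : ℝ => -(2 * g) * (ρ t * ψ t * deriv ψ t)) (Ioo 0 (2 * π * L₂)) (Ioo hm hp)]
    simp only [one_mul]
  have hvol2 : (∫ _u in Ioo 0 (2 * π * L₂), (1:ℝ)) = 2 * π * L₂ := by
    rw [setIntegral_const, smul_eq_mul, mul_one, measureReal_def, Real.volume_Ioo, sub_zero,
      ENNReal.toReal_ofReal (by positivity)]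
  have hRsplit : (∫ p in (Ioo 0 (2 * π * L₁)) ×ˢ (Ioo 0 (2 * π * L₂)),
            Real.cos (p.1 / L₁) ^ 2)
      = (∫ u in Ioo 0 (2 * π * L₁), Real.cos (u / L₁) ^ 2) * (2 * π * L₂) := by
    rw [Measure.volume_eq_prod]
    have h := setIntegral_prod_mul (μ := (volume : Measure ℝ)) (ν := (volume : Measure ℝ))
      (fun u : ℝ => Real.cos (u / L₁) ^ 2) (fun _ : ℝ => (1:ℝ))
      (Ioo 0 (2 * π * L₁)) (Ioo 0 (2 * π * L₂))
    simp only [mul_one] at h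
    rw [h, hvol2]
  have hconst : (∫ t in Ioo hm hp, -(2 * g) * (ρ t * ψ t * deriv ψ t))
      = -(2 * g) * I := by
    rw [hI, ← integral_const_mul]
  have hcos : (∫ u in Ioo 0 (2 * π * L₁), Real.cos (u / L₁) ^ 2) = π * L₁ := by
    have h0 : (0:ℝ) ≤ 2 * π * L₁ := by positivity
    rw [← integral_Ioc_eq_integral_Ioo, ← intervalIntegral.integral_of_le h0]
    have := intervalIntegral.inv_mul_integral_comp_div (a := 0) (b := 2 * π * L₁)
      (f := fun u : ℝ => Real.cos u ^ 2) (c := L₁)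
    have h2 : (2 * π * L₁) / L₁ = 2 * π := by field_simp
    rw [h2] at this
    have h3 : (0:ℝ) / L₁ = 0 := by simp
    rw [h3] at this
    have h4 : (∫ u in (0:ℝ)..2 * π, Real.cos u ^ 2) = π := by
      rw [integral_cos_sq]
      simp [Real.sin_two_pi, Real.cos_two_pi]
    have h5 : L₁⁻¹ * (∫ x in (0:ℝ)..2 * π * L₁, Real.cos (x / L₁) ^ 2) = π := by
      rw [this, h4]
    field_simp at h5
    rw [show L₁ * 2 * π = 2 * π * L₁ by ring] at h5
    linarith
  have eq2 : (∫ x in slab hm hp L₁ L₂,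
        (2 * g * ρ (x 2) * pdl 0 w₁ x * w₃ x
          - a (x 2) * (pdl 0 w₁ x + pdl 2 w₃ x) ^ 2))
      = -(2 * g) * I * ((∫ u in Ioo 0 (2 * π * L₁), Real.cos (u / L₁) ^ 2) * (2 * π * L₂)) := by
    rw [key, hsplit, hsplit2, hvol2, hconst]; ring
  constructor
  · rw [eq2, hRsplit]
  · rw [eq2, hcos]
    have : 0 < -(2 * g) * I := by nlinarith
    have hπ : 0 < π := Real.pi_pos
    positivity
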